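/- Let k ≥ 3 be an integer, p a prime, and suppose {(x_i^{(1)},...,x_i^{(k)})}_{i∈[m]} is an (n, m) local PMF for k-cycles over F_p. For each 1 ≤ j ≤ k let f_j : F_p^n → {0,1} be the characteristic function of the set {x_i^{(j)} : i ∈ [m]}. Then the set of k-cycles of the tuple (f_1, ..., f_k) is exactly {(x_i^{(1)},...,x_i^{(k)}) : i ∈ [m]} (so there are exactly m of them and they are pairwise disjoint), and (f_1, ..., f_k) is ε-far from k-cycle-freeness for ε = m/p^n. -/

import Mathlib

/-- Let `{(x_i^{(1)},...,x_i^{(k)})}_{i∈[m]}` be an `(n, m)` local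
PMF for `k`-cycles over `F_p`, and for each `j` let `f_j` be the characteristic
function of `{x_i^{(j)} : i ∈ [m]}`. Then the `k`-cycles of `(f_1, ..., f_k)`
are exactly the tuples `(x_i^{(1)},...,x_i^{(k)})` (so there are exactly `m` of
them, pairwise disjoint), and `(f_1,...,f_k)` is `(m/p^n)`-far from
`k`-cycle-freeness. -/
theorem stmt_10 (k n m p : ℕ) [Fact p.Prime] (hk : 3 ≤ k)
    (x : Fin m → Fin k → Fin n → ZMod p)
    (hsum : ∀ i, ∑ j, x i j = 0)
    (hpmf : ∀ idx : Fin k → Fin m, ∑ j, x (idx j) j = 0 → ∀ a b, idx a = idx b)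
    (f : Fin k → (Fin n → ZMod p) → Bool)
    (hf : ∀ j v, f j v = true ↔ ∃ i, x i j = v) :
    (∀ y : Fin k → Fin n → ZMod p,
      ((∑ j, y j = 0) ∧ ∀ j, f j (y j) = true) ↔ ∃ i, y = x i) ∧
    (∀ j, Function.Injective fun i => x i j) ∧
    (∀ g : Fin k → (Fin n → ZMod p) → Bool,
      (¬ ∃ y : Fin k → Fin n → ZMod p, (∑ j, y j = 0) ∧ ∀ j, g j (y j) = true) →
      (m : ℝ) / (p ^ n : ℝ) ≤
        ∑ j, ((Finset.univ.filter fun v => f j v ≠ g j v).card : ℝ) / (p ^ n : ℝ)) := by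
  have hk0 : 0 < k := by omega
  have hk1 : 1 < k := by omega
  have hinj : ∀ j, Function.Injective fun i => x i j := by
    intro j a b hab
    simp only at hab
    set idx : Fin k → Fin m := fun j' => if j' = j then a else b with hidx
    have hs : ∑ j', x (idx j') j' = 0 := by
      have hcongr : ∀ j' ∈ Finset.univ, x (idx j') j' = x b j' := by
        intro j' _
        by_cases h : j' = j
        · subst h; simp [hidx, hab]
        · simp [hidx, h]
      rw [Finset.sum_congr rfl hcongr]
      exact hsum b
    -- pick j' ≠ j
    set j2 : Fin k := if j = ⟨0, hk0⟩ then ⟨1, hk1⟩ else ⟨0, hk0⟩ with hj2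
    have hne : j2 ≠ j := by
      by_cases h : j = ⟨0, hk0⟩
      · subst h
        simp only [hj2, if_pos rfl]
        intro he
        exact absurd (congrArg Fin.val he) (by simp)
      · simp only [hj2, if_neg h]
        exact fun he => h he.symm
    have := hpmf idx hs j j2
    simpa [hidx, hne] using this
  refine ⟨?_, hinj, ?_⟩
  · intro y
    constructor
    · rintro ⟨hy0, hyf⟩
      choose idx hidx using fun j => (hf j (y j)).1 (hyf j)
      have hs : ∑ j, x (idx j) j = 0 := by
        rw [Finset.sum_congr rfl fun j _ => hidx j]
        exact hy0
      refine ⟨idx ⟨0, hk0⟩, ?_⟩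
      funext j
      rw [← hidx j]
      rw [hpmf idx hs j ⟨0, hk0⟩]
    · rintro ⟨i, rfl⟩
      exact ⟨hsum i, fun j => (hf j _).2 ⟨i, rfl⟩⟩
  · intro g hg
    have hbr : ∀ i, ∃ j, g j (x i j) ≠ true := by
      intro i
      by_contra h
      push_neg at h
      exact hg ⟨x i, hsum i, h⟩
    choose ji hji using hbr
    set D : Fin k → Finset (Fin n → ZMod p) :=
      fun j => Finset.univ.filter fun v => f j v ≠ g j v with hD
    have hcard : m ≤ ∑ j, (D j).card := by
      have h1 : (Finset.univ : Finset (Fin m)).card =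
          ∑ j, (Finset.univ.filter fun i => ji i = j).card := by
        exact Finset.card_eq_sum_card_fiberwise (fun i _ => Finset.mem_univ (ji i))
      have h2 : ∀ j, (Finset.univ.filter fun i => ji i = j).card ≤ (D j).card := by
        intro j
        apply Finset.card_le_card_of_injOn (fun i => x i j)
        · intro i hi
          simp only [Finset.mem_coe, Finset.mem_filter, Finset.mem_univ, true_and] at hi
          simp only [hD, Finset.mem_coe, Finset.mem_filter, Finset.mem_univ, true_and]
          rw [(hf j (x i j)).2 ⟨i, rfl⟩, ← hi]
          exact Ne.symm (hji i)
        · intro a _ b _ hab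
          exact hinj j hab
      calc m = (Finset.univ : Finset (Fin m)).card := by simp
        _ = ∑ j, (Finset.univ.filter fun i => ji i = j).card := h1
        _ ≤ ∑ j, (D j).card := Finset.sum_le_sum fun j _ => h2 j
    have hp : (0 : ℝ) < (p : ℝ) ^ n := by
      have : 0 < p := (Fact.out : p.Prime).pos
      positivity
    have hcast : (m : ℝ) ≤ ∑ j, ((D j).card : ℝ) := by exact_mod_cast hcard
    rw [← Finset.sum_div]
    gcongr
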